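/- Let n ≥ 3 and let S = {(cos(2πk/n), sin(2πk/n)) : k = 0, 1, …, n−1} ⊆ ℝ² be the vertex set of a regular n-gon inscribed in the unit circle. Then every ellipse E ⊆ ℝ² containing S has Lebesgue measure (area) at least π, with equality if and only if E is the closed unit disk; i.e., the closed unit disk is the unique minimum-volume enclosing ellipse of S. -/

import Mathlib

open MeasureTheory Metric Set

noncomputable section

/-- `Euc n` is the Euclidean space `ℝⁿ`. -/
abbrev Euc (n : ℕ) : Type := EuclideanSpace ℝ (Fin n)

/-- A state space of linear dimension `ℓ`: a compact convex set contained in (and affinely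
spanning) an affine hyperplane not through the origin, here written as `{x | f x = 1}`
for a nonzero linear functional `f`. -/
def IsStateSpace {ℓ : ℕ} (𝕊 : Set (Euc ℓ)) : Prop :=
  IsCompact 𝕊 ∧ Convex ℝ 𝕊 ∧
    ∃ f : Euc ℓ →ₗ[ℝ] ℝ, f ≠ 0 ∧
      (affineSpan ℝ 𝕊 : Set (Euc ℓ)) = {x | f x = 1}

/-- `R` is admissible for the data set `X` (w.r.t. the state space `𝕊`): it is the image of `𝕊`
under some linear map and satisfies `X ⊆ R ⊆ aff X`. -/
def Admissible {ℓ n : ℕ} (𝕊 : Set (Euc ℓ)) (X R : Set (Euc n)) : Prop :=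
  (∃ M : Euc ℓ →ₗ[ℝ] Euc n, R = M '' 𝕊) ∧ X ⊆ R ∧ R ⊆ (affineSpan ℝ X : Set (Euc n))

/-- Data-driven inference: the admissible sets for `X` of minimal `d`-dimensional Hausdorff
measure, where `d = dim aff X`. -/
def ddi {ℓ n : ℕ} (X : Set (Euc n)) (𝕊 : Set (Euc ℓ)) : Set (Set (Euc n)) :=
  {R | Admissible 𝕊 X R ∧ ∀ R' : Set (Euc n), Admissible 𝕊 X R' →
      μH[(Module.finrank ℝ (affineSpan ℝ X).direction : ℝ)] R ≤
        μH[(Module.finrank ℝ (affineSpan ℝ X).direction : ℝ)] R'}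

/-- A (hyper)-ellipsoid state space in `ℝ^ℓ`: the image of the closed unit ball of `ℝ^(ℓ-1)`
under an injective affine map. -/
def IsHyperEllipsoid {ℓ : ℕ} (𝕊 : Set (Euc ℓ)) : Prop :=
  ∃ F : Euc (ℓ - 1) →ᵃ[ℝ] Euc ℓ, Function.Injective F ∧ 𝕊 = F '' closedBall 0 1

/-- An ellipsoid in `ℝ^d`: the image of the closed unit ball under an invertible affine
transformation. -/
def IsEllipsoid {d : ℕ} (E : Set (Euc d)) : Prop :=
  ∃ F : Euc d ≃ᵃ[ℝ] Euc d, E = F '' closedBall 0 1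

lemma aux_exp_sum (n m : ℕ) (hm : 0 < m) (hmn : m < n) :
    ∑ k ∈ Finset.range n, Complex.exp (2 * Real.pi * Complex.I * m * k / n) = 0 := by
  have hn : (n : ℂ) ≠ 0 := Nat.cast_ne_zero.mpr (by omega)
  set z : ℂ := Complex.exp (2 * Real.pi * Complex.I * m / n) with hz
  have hzk : ∀ k : ℕ, Complex.exp (2 * Real.pi * Complex.I * m * k / n) = z ^ k := by
    intro k
    rw [hz, ← Complex.exp_nat_mul]
    ring_nf
  have hz1 : z ≠ 1 := by
    rw [hz]
    intro h
    rw [Complex.exp_eq_one_iff] at h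
    obtain ⟨j, hj⟩ := h
    have h2 : (2 * Real.pi * Complex.I) ≠ 0 := by
      simp [Real.pi_ne_zero, Complex.I_ne_zero, Complex.ofReal_ne_zero]
    have hmc : (m : ℂ) = j * n := by
      field_simp at hj
      have : (2 * (Real.pi:ℂ) * Complex.I) * m = (2 * (Real.pi:ℂ) * Complex.I) * (j * n) := by
        ring_nf; ring_nf at hj; linear_combination (2 * (Real.pi:ℂ) * Complex.I) * hj
      exact mul_left_cancel₀ h2 this
    have hmz : (m : ℤ) = j * n := by exact_mod_cast hmc
    have hd : (n:ℤ) ∣ m := Dvd.intro j (by linarith)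
    have := Int.le_of_dvd (by exact_mod_cast hm) hd
    omega
  have hzn : z ^ n = 1 := by
    rw [← hzk n]
    have : 2 * (Real.pi:ℂ) * Complex.I * m * n / n = (m : ℤ) * (2 * Real.pi * Complex.I) := by
      rw [mul_div_assoc, div_self hn]; push_cast; ring
    rw [this, Complex.exp_int_mul_two_pi_mul_I]
  have hgs := geom_sum_eq hz1 n
  calc ∑ k ∈ Finset.range n, Complex.exp (2 * Real.pi * Complex.I * m * k / n)
      = ∑ k ∈ Finset.range n, z ^ k := by simp_rw [hzk]
    _ = (z ^ n - 1) / (z - 1) := hgs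
    _ = 0 := by rw [hzn]; simp

lemma aux_cos_sum (n m : ℕ) (hm : 0 < m) (hmn : m < n) :
    ∑ k ∈ Finset.range n, Real.cos (2 * Real.pi * m * k / n) = 0 ∧
    ∑ k ∈ Finset.range n, Real.sin (2 * Real.pi * m * k / n) = 0 := by
  have h := aux_exp_sum n m hm hmn
  have hre : ∀ k : ℕ, Complex.exp (2 * Real.pi * Complex.I * m * k / n)
      = Complex.ofReal (Real.cos (2 * Real.pi * m * k / n))
        + Complex.ofReal (Real.sin (2 * Real.pi * m * k / n)) * Complex.I := by
    intro k
    rw [show (2 * (Real.pi:ℂ) * Complex.I * m * k / n)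
        = ((2 * Real.pi * m * k / n : ℝ) : ℂ) * Complex.I from by push_cast; ring]
    rw [Complex.exp_mul_I, ← Complex.ofReal_cos, ← Complex.ofReal_sin]
  simp_rw [hre] at h
  rw [Finset.sum_add_distrib, ← Finset.sum_mul, ← Complex.ofReal_sum, ← Complex.ofReal_sum] at h
  have hc := congrArg Complex.re h
  have hs := congrArg Complex.im h
  simp only [Complex.add_re, Complex.add_im, Complex.ofReal_re, Complex.ofReal_im,
    Complex.mul_re, Complex.mul_im, Complex.I_re, Complex.I_im, Complex.zero_re, Complex.zero_im,
    mul_zero, mul_one, zero_mul, sub_zero, zero_add, add_zero, zero_sub, neg_zero] at hc hs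
  exact ⟨hc, hs⟩

lemma aux_det_le (u0 u1 v0 v1 c0 c1 : ℝ)
    (H : u0^2+u1^2+v0^2+v1^2 + 2*(c0^2+c1^2) ≤ 2) : |u0*v1 - u1*v0| ≤ 1 := by
  rw [abs_le]
  constructor
  · nlinarith [sq_nonneg (u0 + v1), sq_nonneg (u1 - v0), sq_nonneg c0, sq_nonneg c1]
  · nlinarith [sq_nonneg (u0 - v1), sq_nonneg (u1 + v0), sq_nonneg c0, sq_nonneg c1]

lemma aux_abstract (s t d sc : ℝ) (hs : 0 ≤ s) (ht : 0 ≤ t) (hsc : 0 ≤ sc)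
    (H : s + t + 2*sc ≤ 2) (hst : 1 + d^2 ≤ s*t) :
    sc = 0 ∧ d = 0 ∧ s = 1 ∧ t = 1 := by
  have h1 : sc = 0 := by nlinarith [sq_nonneg (s - t), sq_nonneg d, sq_nonneg sc]
  have h2 : d = 0 := by nlinarith [sq_nonneg (s - t), sq_nonneg d]
  have h3 : s = 1 := by nlinarith [sq_nonneg (s - t), sq_nonneg (s - 1)]
  have h4 : t = 1 := by nlinarith [sq_nonneg (s - t), sq_nonneg (t - 1)]
  exact ⟨h1, h2, h3, h4⟩

lemma aux_det_eq (u0 u1 v0 v1 c0 c1 : ℝ)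
    (H : u0^2+u1^2+v0^2+v1^2 + 2*(c0^2+c1^2) ≤ 2)
    (Heq : (u0*v1 - u1*v0)^2 = 1) :
    c0 = 0 ∧ c1 = 0 ∧ u0^2+u1^2 = 1 ∧ v0^2+v1^2 = 1 ∧ u0*v0+u1*v1 = 0 := by
  have hst : 1 + (u0*v0+u1*v1)^2 ≤ (u0^2+u1^2)*(v0^2+v1^2) := by nlinarith
  obtain ⟨h1, h2, h3, h4⟩ := aux_abstract (u0^2+u1^2) (v0^2+v1^2) (u0*v0+u1*v1)
    (c0^2+c1^2) (by positivity) (by positivity) (by positivity) (by linarith) hst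
  refine ⟨?_, ?_, h3, h4, h2⟩ <;> nlinarith [sq_nonneg c0, sq_nonneg c1]

lemma norm_sq_euc2 (x : Euc 2) : ‖x‖^2 = x 0^2 + x 1^2 := by
  rw [EuclideanSpace.norm_eq, Real.sq_sqrt (by positivity)]
  simp [Fin.sum_univ_two, sq_abs]

lemma det_euc2 (B : Euc 2 →ₗ[ℝ] Euc 2) :
    LinearMap.det B = B (EuclideanSpace.single 0 1) 0 * B (EuclideanSpace.single 1 1) 1
      - B (EuclideanSpace.single 0 1) 1 * B (EuclideanSpace.single 1 1) 0 := by
  rw [← LinearMap.det_toMatrix (EuclideanSpace.basisFun (Fin 2) ℝ).toBasis]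
  rw [Matrix.det_fin_two]
  simp [LinearMap.toMatrix_apply, OrthonormalBasis.coe_toBasis_repr_apply,
    EuclideanSpace.basisFun_repr, OrthonormalBasis.coe_toBasis, EuclideanSpace.basisFun_apply]
  ring

lemma vol_ball_euc2 : volume (closedBall (0:Euc 2) 1) = ENNReal.ofReal Real.pi := by
  rw [EuclideanSpace.volume_closedBall]
  have : ((Fintype.card (Fin 2) : ℝ) / 2 + 1) = 2 := by simp; norm_num
  rw [this, Real.Gamma_two]
  simp [Real.sq_sqrt Real.pi_pos.le]

lemma euc2_decomp (x : Euc 2) :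
    x = x 0 • (EuclideanSpace.single (0:Fin 2) (1:ℝ)) + x 1 • (EuclideanSpace.single 1 1) := by
  ext i
  fin_cases i <;> simp [EuclideanSpace.single_apply]

set_option maxHeartbeats 1000000 in
theorem stmt_14 (n : ℕ) (hn : 3 ≤ n) (S : Set (Euc 2))
    (hS : S = {p : Euc 2 | ∃ k : Fin n,
      p 0 = Real.cos (2 * Real.pi * (k : ℕ) / n) ∧
      p 1 = Real.sin (2 * Real.pi * (k : ℕ) / n)}) :
    ∀ E : Set (Euc 2), IsEllipsoid E → S ⊆ E →
      ENNReal.ofReal Real.pi ≤ volume E ∧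
      (volume E = ENNReal.ofReal Real.pi ↔ E = closedBall (0 : Euc 2) 1) := by
  intro E hEll hSE
  obtain ⟨F, hE⟩ := hEll
  set G := F.symm with hG
  set e0 : Euc 2 := EuclideanSpace.single 0 1 with he0
  set e1 : Euc 2 := EuclideanSpace.single 1 1 with he1
  set u : Euc 2 := G.linear e0 with hu
  set v : Euc 2 := G.linear e1 with hv
  set c : Euc 2 := G 0 with hc
  -- affine decomposition of G
  have hGlin : ∀ x : Euc 2, (G : Euc 2 → Euc 2) x = G.linear x + c := by
    intro x
    have := (G : Euc 2 →ᵃ[ℝ] Euc 2).decomp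
    have hx := congrFun this x
    simpa using hx
  -- the key pointwise inequality
  have key : ∀ k : ℕ, k < n →
      (Real.cos (2*Real.pi*k/n) * u 0 + Real.sin (2*Real.pi*k/n) * v 0 + c 0)^2
        + (Real.cos (2*Real.pi*k/n) * u 1 + Real.sin (2*Real.pi*k/n) * v 1 + c 1)^2 ≤ 1 := by
    intro k hkn
    set θ : ℝ := 2*Real.pi*k/n with hθ
    set pt : Euc 2 := Real.cos θ • e0 + Real.sin θ • e1 with hpt
    have hpt0 : pt 0 = Real.cos θ := by
      simp [hpt, he0, he1, EuclideanSpace.single_apply]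
    have hpt1 : pt 1 = Real.sin θ := by
      simp [hpt, he0, he1, EuclideanSpace.single_apply]
    have hptS : pt ∈ S := by
      rw [hS]
      exact ⟨⟨k, hkn⟩, by simpa [hθ] using ⟨hpt0, hpt1⟩⟩
    have hptE := hSE hptS
    rw [hE] at hptE
    obtain ⟨y, hy, hyx⟩ := hptE
    have hGpt : G pt = y := by rw [← hyx]; exact F.symm_apply_apply y
    have hny : ‖y‖ ≤ 1 := mem_closedBall_zero_iff.mp hy
    have hyc : ∀ i : Fin 2, y i = Real.cos θ * u i + Real.sin θ * v i + c i := by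
      intro i
      rw [← hGpt, hGlin, hpt]
      simp [hu, hv, smul_eq_mul]
    have hnsq : y 0^2 + y 1^2 ≤ 1 := by
      have h1 := norm_sq_euc2 y
      nlinarith [norm_nonneg y]
    rw [hyc 0, hyc 1] at hnsq
    exact hnsq
  -- trig sums
  have hc1 : ∑ k ∈ Finset.range n, Real.cos (2*Real.pi*k/n) = 0 := by
    have := (aux_cos_sum n 1 one_pos (by omega)).1; simpa using this
  have hs1 : ∑ k ∈ Finset.range n, Real.sin (2*Real.pi*k/n) = 0 := by
    have := (aux_cos_sum n 1 one_pos (by omega)).2; simpa using this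
  have hc2 : ∑ k ∈ Finset.range n, Real.cos (2*Real.pi*2*k/n) = 0 := by
    have := (aux_cos_sum n 2 two_pos (by omega)).1; simpa using this
  have hs2 : ∑ k ∈ Finset.range n, Real.sin (2*Real.pi*2*k/n) = 0 := by
    have := (aux_cos_sum n 2 two_pos (by omega)).2; simpa using this
  -- per-k algebraic identity
  have hident : ∀ k : ℕ,
      (Real.cos (2*Real.pi*k/n) * u 0 + Real.sin (2*Real.pi*k/n) * v 0 + c 0)^2
        + (Real.cos (2*Real.pi*k/n) * u 1 + Real.sin (2*Real.pi*k/n) * v 1 + c 1)^2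
      = ((u 0^2+u 1^2+v 0^2+v 1^2)/2 + (c 0^2 + c 1^2))
        + Real.cos (2*Real.pi*2*k/n) * ((u 0^2+u 1^2-v 0^2-v 1^2)/2)
        + Real.sin (2*Real.pi*2*k/n) * (u 0*v 0 + u 1*v 1)
        + Real.cos (2*Real.pi*k/n) * (2*(u 0*c 0+u 1*c 1))
        + Real.sin (2*Real.pi*k/n) * (2*(v 0*c 0+v 1*c 1)) := by
    intro k
    have h2 : 2*Real.pi*2*(k:ℝ)/n = 2 * (2*Real.pi*k/n) := by ring
    rw [h2, Real.cos_two_mul, Real.sin_two_mul]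
    have h1 := Real.sin_sq_add_cos_sq (2*Real.pi*k/n)
    linear_combination (v 0^2 + v 1^2) * h1
  -- sum it up
  have hnpos : (0:ℝ) < n := by positivity
  have hsum_le : ∑ k ∈ Finset.range n,
      ((Real.cos (2*Real.pi*k/n) * u 0 + Real.sin (2*Real.pi*k/n) * v 0 + c 0)^2
        + (Real.cos (2*Real.pi*k/n) * u 1 + Real.sin (2*Real.pi*k/n) * v 1 + c 1)^2)
      ≤ (n : ℝ) := by
    calc _ ≤ ∑ k ∈ Finset.range n, (1:ℝ) :=
          Finset.sum_le_sum (fun k hk => key k (Finset.mem_range.mp hk))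
      _ = n := by simp
  have hsum_eq : ∑ k ∈ Finset.range n,
      ((Real.cos (2*Real.pi*k/n) * u 0 + Real.sin (2*Real.pi*k/n) * v 0 + c 0)^2
        + (Real.cos (2*Real.pi*k/n) * u 1 + Real.sin (2*Real.pi*k/n) * v 1 + c 1)^2)
      = (n : ℝ) * ((u 0^2+u 1^2+v 0^2+v 1^2)/2 + (c 0^2 + c 1^2)) := by
    rw [Finset.sum_congr rfl (fun k _ => hident k)]
    rw [Finset.sum_add_distrib, Finset.sum_add_distrib, Finset.sum_add_distrib,
      Finset.sum_add_distrib, ← Finset.sum_mul, ← Finset.sum_mul, ← Finset.sum_mul,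
      ← Finset.sum_mul, hc1, hs1, hc2, hs2, Finset.sum_const, Finset.card_range]
    simp only [zero_mul, add_zero, nsmul_eq_mul]
  have H : u 0^2+u 1^2+v 0^2+v 1^2 + 2*(c 0^2+c 1^2) ≤ 2 := by
    rw [hsum_eq] at hsum_le
    have hX : (u 0^2+u 1^2+v 0^2+v 1^2)/2 + (c 0^2 + c 1^2) ≤ 1 :=
      (mul_le_mul_iff_right₀ hnpos).mp (by rw [mul_one]; exact hsum_le)
    linarith
  -- determinants
  set Bl : Euc 2 →ₗ[ℝ] Euc 2 := (G.linear : Euc 2 →ₗ[ℝ] Euc 2) with hBl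
  set Al : Euc 2 →ₗ[ℝ] Euc 2 := (F.linear : Euc 2 →ₗ[ℝ] Euc 2) with hAl
  have hdetB : LinearMap.det Bl = u 0 * v 1 - u 1 * v 0 := by
    rw [det_euc2 Bl]; rfl
  have hdetB_le : |LinearMap.det Bl| ≤ 1 := by
    rw [hdetB]; exact aux_det_le _ _ _ _ _ _ H
  have hABone : LinearMap.det Al * LinearMap.det Bl = 1 := by
    rw [← LinearMap.det_comp]
    have : Al.comp Bl = LinearMap.id := by
      apply LinearMap.ext; intro x
      simp only [hAl, hBl, hG, LinearMap.comp_apply, LinearMap.id_apply, LinearEquiv.coe_coe]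
      rw [AffineEquiv.linear_symm]
      exact F.linear.apply_symm_apply x
    rw [this, LinearMap.det_id]
  have hdetA_ne : LinearMap.det Al ≠ 0 := by
    intro h; rw [h, zero_mul] at hABone; exact zero_ne_one hABone
  have hdetB_ne : LinearMap.det Bl ≠ 0 := by
    intro h; rw [h, mul_zero] at hABone; exact zero_ne_one hABone
  have hdetA_ge : 1 ≤ |LinearMap.det Al| := by
    have h1 : |LinearMap.det Al| * |LinearMap.det Bl| = 1 := by
      rw [← abs_mul, hABone, abs_one]
    have h3 : |LinearMap.det Al| * |LinearMap.det Bl| ≤ |LinearMap.det Al| * 1 :=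
      mul_le_mul_of_nonneg_left hdetB_le (abs_nonneg _)
    rw [mul_one] at h3
    linarith
  -- volume computation
  have hvol : volume E = ENNReal.ofReal |LinearMap.det Al| * ENNReal.ofReal Real.pi := by
    rw [hE]
    have hFx : ∀ x : Euc 2, (F : Euc 2 → Euc 2) x = Al x + F 0 := by
      intro x
      have := (F : Euc 2 →ᵃ[ℝ] Euc 2).decomp
      have hx := congrFun this x
      simpa [hAl] using hx
    have himg : (F : Euc 2 → Euc 2) '' closedBall 0 1
        = (fun x => x + F 0) '' (Al '' closedBall 0 1) := by
      rw [Set.image_image]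
      exact Set.image_congr' hFx
    rw [himg]
    rw [Set.image_add_right]
    rw [measure_preimage_add_right]
    rw [Measure.addHaar_image_linearMap]
    rw [vol_ball_euc2]
  -- first part
  have hπpos : (0:ℝ) < Real.pi := Real.pi_pos
  have hone_le : 1 ≤ ENNReal.ofReal |LinearMap.det Al| := by
    rw [show (1:ENNReal) = ENNReal.ofReal 1 from (ENNReal.ofReal_one).symm]
    exact ENNReal.ofReal_le_ofReal hdetA_ge
  constructor
  · rw [hvol]
    calc ENNReal.ofReal Real.pi = 1 * ENNReal.ofReal Real.pi := (one_mul _).symm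
      _ ≤ ENNReal.ofReal |LinearMap.det Al| * ENNReal.ofReal Real.pi :=
          mul_le_mul_left hone_le _
  · constructor
    · intro hvolE
      -- deduce |det Al| = 1
      have hππ : ENNReal.ofReal Real.pi ≠ 0 := by
        simp [ENNReal.ofReal_eq_zero]; linarith
      have hππ' : ENNReal.ofReal Real.pi ≠ ⊤ := ENNReal.ofReal_ne_top
      rw [hvol] at hvolE
      have hdetA1 : |LinearMap.det Al| = 1 := by
        rw [← ENNReal.ofReal_mul (abs_nonneg _)] at hvolE
        rw [ENNReal.ofReal_eq_ofReal_iff (by positivity) hπpos.le] at hvolE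
        have := mul_right_cancel₀ (ne_of_gt hπpos) (hvolE.trans (one_mul Real.pi).symm)
        exact this
      have hdetB1 : (u 0 * v 1 - u 1 * v 0)^2 = 1 := by
        have h1 : |LinearMap.det Al| * |LinearMap.det Bl| = 1 := by
          rw [← abs_mul, hABone, abs_one]
        rw [hdetA1, one_mul] at h1
        rw [← hdetB, ← sq_abs, h1, one_pow]
      obtain ⟨hc0, hc1', hU1, hU2, hdot⟩ := aux_det_eq _ _ _ _ _ _ H hdetB1
      -- G is norm preserving
      have hnormG : ∀ x : Euc 2, ‖G x‖ = ‖x‖ := by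
        intro x
        have hxd := euc2_decomp x
        have hGx : ∀ i : Fin 2, G x i = x 0 * u i + x 1 * v i + c i := by
          intro i
          rw [hGlin]
          conv_lhs => rw [hxd]
          simp [hu, hv, he0, he1, smul_eq_mul]
        have h1 : ‖G x‖^2 = ‖x‖^2 := by
          rw [norm_sq_euc2, norm_sq_euc2, hGx 0, hGx 1, hc0, hc1']
          linear_combination x 0^2 * hU1 + x 1^2 * hU2 + 2 * x 0 * x 1 * hdot
        have h2 : Real.sqrt (‖G x‖^2) = Real.sqrt (‖x‖^2) := by rw [h1]
        rwa [Real.sqrt_sq (norm_nonneg _), Real.sqrt_sq (norm_nonneg _)] at h2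
      ext x
      simp only [hE, Set.mem_image, mem_closedBall_zero_iff]
      constructor
      · rintro ⟨y, hy, rfl⟩
        have : ‖G (F y)‖ = ‖F y‖ := hnormG _
        rw [F.symm_apply_apply] at this
        rw [← this]
        exact hy
      · intro hx
        refine ⟨G x, ?_, F.apply_symm_apply x⟩
        rw [hnormG]
        exact hx
    · intro hEb
      rw [hEb, vol_ball_euc2]
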